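/- arXiv:1504.03969 — 5 statements merged into one kernel-verified Lean document; each statement's English description precedes it below -/
import Mathlib

section
/- Let u : (M, M_i) → (N, N_i) be a morphism of filtered modules over a filtered ring, where the filtrations on M and N are exhaustive, and for each i ∈ ℤ the groups M_i and N_i are complete and separated with respect to the filtrations (M_{i-n})_{n∈ℕ} and (N_{i-n})_{n∈ℕ} respectively. If the graded map gr(u) : gr(M) → gr(N) is surjective, then for every i ∈ ℤ one has u(M_i) = N_i; in particular u is surjective. -/
/-- If `u : (M, Mᵢ) → (N, Nᵢ)` is a morphism of filtered modules with exhaustive filtrations,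
each `Mᵢ`, `Nᵢ` complete and separated for the filtrations `(M_{i-n})ₙ`, `(N_{i-n})ₙ`, and
`gr(u)` surjective, then `u(Mᵢ) = Nᵢ` for all `i`; in particular `u` is surjective. -/
theorem stmt_1 {D M N : Type*} [Ring D] [AddCommGroup M] [AddCommGroup N]
    [Module D M] [Module D N]
    (FD : ℤ → AddSubgroup D) (hFDmono : Monotone FD)
    (hFDone : (1 : D) ∈ FD 0)
    (hFDmul : ∀ i j : ℤ, ∀ a ∈ FD i, ∀ b ∈ FD j, a * b ∈ FD (i + j))
    (FM : ℤ → AddSubgroup M) (hFMmono : Monotone FM)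
    (hFMsmul : ∀ i j : ℤ, ∀ a ∈ FD i, ∀ x ∈ FM j, a • x ∈ FM (i + j))
    (FN : ℤ → AddSubgroup N) (hFNmono : Monotone FN)
    (hFNsmul : ∀ i j : ℤ, ∀ a ∈ FD i, ∀ y ∈ FN j, a • y ∈ FN (i + j))
    -- exhaustiveness
    (hMexh : ∀ x : M, ∃ i, x ∈ FM i) (hNexh : ∀ y : N, ∃ i, y ∈ FN i)
    -- each `Mᵢ` is complete and separated with respect to `(M_{i-n})_{n ∈ ℕ}`
    (hMcomp : ∀ i : ℤ, ∀ y : ℕ → M, (∀ n, y n ∈ FM i) →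
      (∀ n : ℕ, y (n + 1) - y n ∈ FM (i - (n : ℤ))) →
      ∃ z ∈ FM i, ∀ n : ℕ, z - y n ∈ FM (i - (n : ℤ)))
    (hMsep : ∀ i : ℤ, ∀ x ∈ FM i, (∀ n : ℕ, x ∈ FM (i - (n : ℤ))) → x = 0)
    -- each `Nᵢ` is complete and separated with respect to `(N_{i-n})_{n ∈ ℕ}`
    (hNcomp : ∀ i : ℤ, ∀ y : ℕ → N, (∀ n, y n ∈ FN i) →
      (∀ n : ℕ, y (n + 1) - y n ∈ FN (i - (n : ℤ))) →
      ∃ z ∈ FN i, ∀ n : ℕ, z - y n ∈ FN (i - (n : ℤ)))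
    (hNsep : ∀ i : ℤ, ∀ y ∈ FN i, (∀ n : ℕ, y ∈ FN (i - (n : ℤ))) → y = 0)
    -- `u` is a filtered morphism
    (u : M →ₗ[D] N) (hu : ∀ i : ℤ, ∀ x ∈ FM i, u x ∈ FN i)
    -- `gr(u)` is surjective
    (hgrsurj : ∀ i : ℤ, ∀ y ∈ FN i, ∃ x ∈ FM i, u x - y ∈ FN (i - 1)) :
    (∀ i : ℤ, ∀ y ∈ FN i, ∃ x ∈ FM i, u x = y) ∧ Function.Surjective u := by
  have hstep : ∀ j : ℤ, ∀ y : N, ∃ x : M, y ∈ FN j → (x ∈ FM j ∧ u x - y ∈ FN (j - 1)) := by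
    intro j y
    by_cases hy : y ∈ FN j
    · obtain ⟨x, hx1, hx2⟩ := hgrsurj j y hy
      exact ⟨x, fun _ => ⟨hx1, hx2⟩⟩
    · exact ⟨0, fun h => absurd h hy⟩
  choose s hs using hstep
  have key : ∀ i : ℤ, ∀ y ∈ FN i, ∃ x ∈ FM i, u x = y := by
    intro i y hy
    -- build the sequence of approximations
    let seq : ℕ → M := fun n => Nat.rec (s i y)
      (fun n x => x + s (i - ((n : ℤ) + 1)) (y - u x)) n
    have hseq : ∀ n : ℕ, seq n ∈ FM i ∧ u (seq n) - y ∈ FN (i - ((n : ℤ) + 1)) := by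
      intro n
      induction n with
      | zero =>
        obtain ⟨h1, h2⟩ := hs i y hy
        exact ⟨h1, by have : seq 0 = s i y := rfl; rw [this]; simpa using h2⟩
      | succ n ih =>
        obtain ⟨h1, h2⟩ := ih
        have hyu : y - u (seq n) ∈ FN (i - ((n : ℤ) + 1)) := by
          have := (FN (i - ((n : ℤ) + 1))).neg_mem h2
          simpa using this
        obtain ⟨hw1, hw2⟩ := hs (i - ((n : ℤ) + 1)) (y - u (seq n)) hyu
        constructor
        · exact (FM i).add_mem h1
            (hFMmono (by linarith : i - ((n : ℤ) + 1) ≤ i) hw1)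
        · have : u (seq (n + 1)) - y
              = u (s (i - ((n : ℤ) + 1)) (y - u (seq n))) - (y - u (seq n)) := by
            show u (seq n + s (i - ((n : ℤ) + 1)) (y - u (seq n))) - y = _
            rw [map_add]; abel
          rw [this]
          have : i - ((n : ℤ) + 1) - 1 ≤ i - (((n : ℕ) + 1 : ℕ) : ℤ) - 1 + 1 - 1 := by
            push_cast; linarith
          exact hFNmono (by push_cast; linarith) hw2
    have hdiff : ∀ n : ℕ, seq (n + 1) - seq n ∈ FM (i - (n : ℤ)) := by
      intro n
      have hyu : y - u (seq n) ∈ FN (i - ((n : ℤ) + 1)) := by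
        have := (FN (i - ((n : ℤ) + 1))).neg_mem (hseq n).2
        simpa using this
      have hw1 := (hs (i - ((n : ℤ) + 1)) (y - u (seq n)) hyu).1
      have : seq (n + 1) - seq n = s (i - ((n : ℤ) + 1)) (y - u (seq n)) := by
        show seq n + s (i - ((n : ℤ) + 1)) (y - u (seq n)) - seq n = _
        abel
      rw [this]
      exact hFMmono (by linarith) hw1
    obtain ⟨z, hz1, hz2⟩ := hMcomp i seq (fun n => (hseq n).1) hdiff
    refine ⟨z, hz1, ?_⟩
    have hzy : ∀ n : ℕ, u z - y ∈ FN (i - (n : ℤ)) := by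
      intro n
      have h1 : u (z - seq n) ∈ FN (i - (n : ℤ)) := hu _ _ (hz2 n)
      have h2 : u (seq n) - y ∈ FN (i - (n : ℤ)) :=
        hFNmono (by linarith) (hseq n).2
      have : u z - y = u (z - seq n) + (u (seq n) - y) := by
        rw [map_sub]; abel
      rw [this]
      exact (FN _).add_mem h1 h2
    have hbase : u z - y ∈ FN i := by simpa using hzy 0
    have := hNsep i (u z - y) hbase hzy
    exact sub_eq_zero.mp this
  refine ⟨key, fun y => ?_⟩
  obtain ⟨i, hi⟩ := hNexh y
  obtain ⟨x, _, hx⟩ := key i y hi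
  exact ⟨x, hx⟩
end

section
/- Let u : (M, M_i) → (N, N_i) be a morphism of filtered modules such that the filtrations are exhaustive and separated (resp. complete as needed), with gr(u) : gr(M) → gr(N) injective. Then for every i ∈ ℤ, M ∩ u^{-1}(N_i) = M_i, i.e. u(M_i) = u(M) ∩ N_i (u is a strict monomorphism). -/
/-- If `u : (M, Mᵢ) → (N, Nᵢ)` is a morphism of filtered modules with exhaustive and separated
filtrations, and `gr(u)` is injective, then `u` is a strict monomorphism:
`M ∩ u⁻¹(Nᵢ) = Mᵢ`, i.e. `u(Mᵢ) = u(M) ∩ Nᵢ`, for every `i`. -/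
theorem stmt_2 {D M N : Type*} [Ring D] [AddCommGroup M] [AddCommGroup N]
    [Module D M] [Module D N]
    (FD : ℤ → AddSubgroup D) (hFDmono : Monotone FD)
    (hFDone : (1 : D) ∈ FD 0)
    (hFDmul : ∀ i j : ℤ, ∀ a ∈ FD i, ∀ b ∈ FD j, a * b ∈ FD (i + j))
    (FM : ℤ → AddSubgroup M) (hFMmono : Monotone FM)
    (hFMsmul : ∀ i j : ℤ, ∀ a ∈ FD i, ∀ x ∈ FM j, a • x ∈ FM (i + j))
    (FN : ℤ → AddSubgroup N) (hFNmono : Monotone FN)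
    (hFNsmul : ∀ i j : ℤ, ∀ a ∈ FD i, ∀ y ∈ FN j, a • y ∈ FN (i + j))
    -- exhaustive and separated filtrations
    (hMexh : ∀ x : M, ∃ i, x ∈ FM i) (hMsep : ∀ x : M, (∀ i, x ∈ FM i) → x = 0)
    (hNexh : ∀ y : N, ∃ i, y ∈ FN i) (hNsep : ∀ y : N, (∀ i, y ∈ FN i) → y = 0)
    -- `u` is a filtered morphism
    (u : M →ₗ[D] N) (hu : ∀ i : ℤ, ∀ x ∈ FM i, u x ∈ FN i)
    -- `gr(u)` is injective
    (hgrinj : ∀ i : ℤ, ∀ x ∈ FM i, u x ∈ FN (i - 1) → x ∈ FM (i - 1)) :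
    Function.Injective u ∧ ∀ (i : ℤ) (x : M), u x ∈ FN i ↔ x ∈ FM i := by
  have key : ∀ n : ℕ, ∀ i : ℤ, ∀ x : M, x ∈ FM (i + n) → u x ∈ FN i → x ∈ FM i := by
    intro n
    induction n with
    | zero => intro i x hx _; simpa using hx
    | succ n ih =>
      intro i x hx hux
      refine ih i x ?_ hux
      have h1 : x ∈ FM (i + (n + 1)) := by push_cast at hx ⊢; convert hx using 2
      have h2 : u x ∈ FN (i + (n + 1) - 1) := hFNmono (by omega) hux
      have := hgrinj (i + (n + 1)) x h1 h2
      have : x ∈ FM (i + n) := by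
        apply hFMmono (by omega) this
      exact_mod_cast this
  have fwd : ∀ (i : ℤ) (x : M), u x ∈ FN i → x ∈ FM i := by
    intro i x hux
    obtain ⟨j, hj⟩ := hMexh x
    rcases le_or_gt j i with h | h
    · exact hFMmono h hj
    · exact key (j - i).toNat i x (by rwa [Int.toNat_of_nonneg (by omega), add_sub_cancel]) hux
  constructor
  · intro x y hxy
    have : u (x - y) = 0 := by rw [map_sub, hxy, sub_self]
    have hz : x - y = 0 := hMsep _ fun i => fwd i _ (this ▸ (FN i).zero_mem)
    exact sub_eq_zero.mp hz
  · intro i x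
    exact ⟨fwd i x, hu i x⟩
end

section
/- Let 0 → (M', M'_i) → (M, M_i) → (M'', M''_i) → 0 be a sequence of morphisms of filtered modules over a filtered ring, where each M_i, M'_i, M''_i is complete and separated for the induced filtration and the filtrations are exhaustive. If g ∘ f = 0 and the sequence of graded modules 0 → gr(M') → gr(M) → gr(M'') → 0 is exact, then for every i ∈ ℤ the sequence of abelian groups 0 → M'_i → M_i → M''_i → 0 is exact; in particular 0 → M' → M → M'' → 0 is exact. -/
private lemma exists_seq_aux {α : Type*} (P : ℕ → α → Prop) (Q : ℕ → α → α → Prop)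
    (a0 : α) (h0 : P 0 a0)
    (hstep : ∀ n a, P n a → ∃ b, P (n+1) b ∧ Q n a b) :
    ∃ u : ℕ → α, (∀ n, P n (u n)) ∧ ∀ n, Q n (u n) (u (n+1)) := by
  choose next hP hQ using hstep
  let u : ∀ n : ℕ, {a : α // P n a} :=
    fun n => Nat.rec ⟨a0, h0⟩ (fun n ih => ⟨next n ih.1 ih.2, hP n ih.1 ih.2⟩) n
  exact ⟨fun n => (u n).1, fun n => (u n).2, fun n => hQ n (u n).1 (u n).2⟩


/-- Let `0 → (M', M'ᵢ) → (M, Mᵢ) → (M'', M''ᵢ) → 0` be a sequence of morphisms of filtered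
modules over a filtered ring, with each filtration step complete and separated and the
filtrations exhaustive.  If `g ∘ f = 0` and `0 → gr M' → gr M → gr M'' → 0` is exact, then for
every `i` the sequence `0 → M'ᵢ → Mᵢ → M''ᵢ → 0` is exact; in particular
`0 → M' → M → M'' → 0` is exact. -/
theorem stmt_3 {D M' M M'' : Type*} [Ring D]
    [AddCommGroup M'] [AddCommGroup M] [AddCommGroup M'']
    [Module D M'] [Module D M] [Module D M'']
    (FD : ℤ → AddSubgroup D) (hFDmono : Monotone FD)
    (hFDone : (1 : D) ∈ FD 0)
    (hFDmul : ∀ i j : ℤ, ∀ a ∈ FD i, ∀ b ∈ FD j, a * b ∈ FD (i + j))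
    (FM' : ℤ → AddSubgroup M') (hFM'mono : Monotone FM')
    (hFM'smul : ∀ i j : ℤ, ∀ a ∈ FD i, ∀ x ∈ FM' j, a • x ∈ FM' (i + j))
    (FM : ℤ → AddSubgroup M) (hFMmono : Monotone FM)
    (hFMsmul : ∀ i j : ℤ, ∀ a ∈ FD i, ∀ x ∈ FM j, a • x ∈ FM (i + j))
    (FM'' : ℤ → AddSubgroup M'') (hFM''mono : Monotone FM'')
    (hFM''smul : ∀ i j : ℤ, ∀ a ∈ FD i, ∀ x ∈ FM'' j, a • x ∈ FM'' (i + j))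
    -- exhaustiveness
    (hM'exh : ∀ x : M', ∃ i, x ∈ FM' i) (hMexh : ∀ x : M, ∃ i, x ∈ FM i)
    (hM''exh : ∀ x : M'', ∃ i, x ∈ FM'' i)
    -- completeness and separatedness of each filtration step
    (hM'comp : ∀ i : ℤ, ∀ y : ℕ → M', (∀ n, y n ∈ FM' i) →
      (∀ n : ℕ, y (n + 1) - y n ∈ FM' (i - (n : ℤ))) →
      ∃ z ∈ FM' i, ∀ n : ℕ, z - y n ∈ FM' (i - (n : ℤ)))
    (hM'sep : ∀ i : ℤ, ∀ x ∈ FM' i, (∀ n : ℕ, x ∈ FM' (i - (n : ℤ))) → x = 0)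
    (hMcomp : ∀ i : ℤ, ∀ y : ℕ → M, (∀ n, y n ∈ FM i) →
      (∀ n : ℕ, y (n + 1) - y n ∈ FM (i - (n : ℤ))) →
      ∃ z ∈ FM i, ∀ n : ℕ, z - y n ∈ FM (i - (n : ℤ)))
    (hMsep : ∀ i : ℤ, ∀ x ∈ FM i, (∀ n : ℕ, x ∈ FM (i - (n : ℤ))) → x = 0)
    (hM''comp : ∀ i : ℤ, ∀ y : ℕ → M'', (∀ n, y n ∈ FM'' i) →
      (∀ n : ℕ, y (n + 1) - y n ∈ FM'' (i - (n : ℤ))) →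
      ∃ z ∈ FM'' i, ∀ n : ℕ, z - y n ∈ FM'' (i - (n : ℤ)))
    (hM''sep : ∀ i : ℤ, ∀ x ∈ FM'' i, (∀ n : ℕ, x ∈ FM'' (i - (n : ℤ))) → x = 0)
    -- filtered morphisms
    (f : M' →ₗ[D] M) (hf : ∀ i : ℤ, ∀ x ∈ FM' i, f x ∈ FM i)
    (g : M →ₗ[D] M'') (hg : ∀ i : ℤ, ∀ x ∈ FM i, g x ∈ FM'' i)
    -- `g ∘ f = 0`
    (hgf : ∀ x : M', g (f x) = 0)
    -- exactness of `0 → gr M' → gr M → gr M'' → 0`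
    (hgrinj : ∀ i : ℤ, ∀ x ∈ FM' i, f x ∈ FM (i - 1) → x ∈ FM' (i - 1))
    (hgrexact : ∀ i : ℤ, ∀ x ∈ FM i, g x ∈ FM'' (i - 1) →
      ∃ x' ∈ FM' i, x - f x' ∈ FM (i - 1))
    (hgrsurj : ∀ i : ℤ, ∀ z ∈ FM'' i, ∃ x ∈ FM i, g x - z ∈ FM'' (i - 1)) :
    (∀ i : ℤ,
      (∀ x ∈ FM' i, f x = 0 → x = 0) ∧
      (∀ x ∈ FM i, g x = 0 → ∃ x' ∈ FM' i, f x' = x) ∧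
      (∀ z ∈ FM'' i, ∃ x ∈ FM i, g x = z)) ∧
    Function.Injective f ∧ (∀ x : M, g x = 0 → ∃ x' : M', f x' = x) ∧
    Function.Surjective g := by

  -- Lemma A: graded injectivity propagates down the filtration
  have lemA : ∀ (n : ℕ) (j : ℤ) (d : M'), d ∈ FM' j → f d ∈ FM (j - n) → d ∈ FM' (j - n) := by
    intro n
    induction n with
    | zero => intro j d hd _; simpa using hd
    | succ n ih =>
      intro j d hd hfd
      have hle : j - ((n : ℤ) + 1) = (j - n) - 1 := by ring
      have h1 : d ∈ FM' (j - n) := ih j d hd (hFMmono (by omega) hfd)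
      have h2 : f d ∈ FM ((j - n) - 1) := by
        rw [← hle]; simpa using hfd
      have := hgrinj (j - n) d h1 h2
      rw [show j - ((n : ℕ) : ℤ) - 1 = j - ((n + 1 : ℕ) : ℤ) by push_cast; ring] at this
      exact this
  -- Part 1 for each i
  have part1 : ∀ i : ℤ, ∀ x ∈ FM' i, f x = 0 → x = 0 := by
    intro i x hx hfx
    refine hM'sep i x hx fun n => ?_
    exact lemA n i x hx (by rw [hfx]; exact zero_mem _)
  -- Part 2 for each i
  have part2 : ∀ i : ℤ, ∀ x ∈ FM i, g x = 0 → ∃ x' ∈ FM' i, f x' = x := by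
    intro i x hx hgx
    obtain ⟨y, hP, hQ⟩ := exists_seq_aux
      (fun n a => a ∈ FM' i ∧ x - f a ∈ FM (i - n))
      (fun n a b => b - a ∈ FM' (i - n)) 0
      (by constructor
          · exact zero_mem _
          · simpa using hx)
      (by
        intro n a ⟨ha, hr⟩
        have hgr : g (x - f a) ∈ FM'' (i - n - 1) := by
          rw [map_sub, hgx, hgf]; simpa using zero_mem _
        obtain ⟨u, hu, hru⟩ := hgrexact (i - n) (x - f a) hr hgr
        refine ⟨a + u, ⟨add_mem ha (hFM'mono (by omega) hu), ?_⟩, ?_⟩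
        · rw [show (i - ((n : ℕ) + 1 : ℕ) : ℤ) = i - n - 1 by push_cast; ring]
          have : x - f (a + u) = (x - f a) - f u := by rw [map_add]; abel
          rw [this]; exact hru
        · simpa using hu)
    obtain ⟨z, hz, hzy⟩ := hM'comp i y (fun n => (hP n).1) hQ
    refine ⟨z, hz, ?_⟩
    have key : ∀ n : ℕ, x - f z ∈ FM (i - n) := by
      intro n
      have h1 : x - f (y n) ∈ FM (i - n) := (hP n).2
      have h2 : f (z - y n) ∈ FM (i - n) := hf _ _ (hzy n)
      have : x - f z = (x - f (y n)) - f (z - y n) := by rw [map_sub]; abel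
      rw [this]; exact sub_mem h1 h2
    have : x - f z = 0 := hMsep i (x - f z) (sub_mem hx (hf i z hz)) key
    exact (sub_eq_zero.mp this).symm
  -- Part 3 for each i
  have part3 : ∀ i : ℤ, ∀ z ∈ FM'' i, ∃ x ∈ FM i, g x = z := by
    intro i z hz
    obtain ⟨y, hP, hQ⟩ := exists_seq_aux
      (fun n a => a ∈ FM i ∧ g a - z ∈ FM'' (i - n))
      (fun n a b => b - a ∈ FM (i - n)) 0
      (by constructor
          · exact zero_mem _
          · simpa using neg_mem hz)
      (by
        intro n a ⟨ha, hga⟩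
        obtain ⟨u, hu, hgu⟩ := hgrsurj (i - n) (z - g a) (by simpa using neg_mem hga)
        refine ⟨a + u, ⟨add_mem ha (hFMmono (by omega) hu), ?_⟩, ?_⟩
        · rw [show (i - ((n : ℕ) + 1 : ℕ) : ℤ) = i - n - 1 by push_cast; ring]
          have : g (a + u) - z = g u - (z - g a) := by rw [map_add]; abel
          rw [this]; exact hgu
        · simpa using hu)
    obtain ⟨x, hx, hxy⟩ := hMcomp i y (fun n => (hP n).1) hQ
    refine ⟨x, hx, ?_⟩
    have key : ∀ n : ℕ, g x - z ∈ FM'' (i - n) := by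
      intro n
      have h1 : g (y n) - z ∈ FM'' (i - n) := (hP n).2
      have h2 : g (x - y n) ∈ FM'' (i - n) := hg _ _ (hxy n)
      have : g x - z = g (x - y n) + (g (y n) - z) := by rw [map_sub]; abel
      rw [this]; exact add_mem h2 h1
    exact sub_eq_zero.mp (hM''sep i (g x - z) (sub_mem (hg i x hx) hz) key)
  refine ⟨fun i => ⟨part1 i, part2 i, part3 i⟩, ?_, ?_, ?_⟩
  · intro a b hab
    obtain ⟨i, hi⟩ := hM'exh (a - b)
    exact sub_eq_zero.mp (part1 i (a - b) hi (by rw [map_sub, hab, sub_self]))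
  · intro x hgx
    obtain ⟨i, hi⟩ := hMexh x
    obtain ⟨x', _, hx'⟩ := part2 i x hi hgx
    exact ⟨x', hx'⟩
  · intro z
    obtain ⟨i, hi⟩ := hM''exh z
    obtain ⟨x, _, hx⟩ := part3 i z hi
    exact ⟨x, hx⟩
end

section
/- Let (D, D_i) be a filtered ring and (N, N_i) a filtered (D, D_i)-module. If (L, L_i) is a finite direct sum of twists (D(n_k), D(n_k)_i) (a filt free module of finite type), then the canonical morphism gr^F Hom_D(L, N) → Hom_{gr D}(gr L, gr N) is an isomorphism of abelian groups. -/
/-- The `i`-th filtration step of a filt free filtered `(D, Dᵢ)`-module of finite type,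
a finite direct sum of twists `D(n k)` (where `D(n)ᵢ = D_{i+n}`). -/
def freeFilt {D : Type*} [Ring D] (FD : ℤ → AddSubgroup D) {s : ℕ} (n : Fin s → ℤ)
    (i : ℤ) : AddSubgroup (Fin s → D) where
  carrier := {x | ∀ k, x k ∈ FD (i + n k)}
  zero_mem' := fun _ => (FD _).zero_mem
  add_mem' := fun hx hy k => (FD _).add_mem (hx k) (hy k)
  neg_mem' := fun hx k => (FD _).neg_mem (hx k)

/-- The `i`-th step `Fᵢ Hom_D(L, N)` of the canonical filtration on `Hom_D(L, N)`. -/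
def homFilt {D L N : Type*} [Ring D] [AddCommGroup L] [Module D L]
    [AddCommGroup N] [Module D N]
    (FL : ℤ → AddSubgroup L) (FN : ℤ → AddSubgroup N) (i : ℤ) :
    AddSubgroup (L →ₗ[D] N) where
  carrier := {φ | ∀ j : ℤ, ∀ x ∈ FL j, φ x ∈ FN (i + j)}
  zero_mem' := fun _ _ _ => (FN _).zero_mem
  add_mem' := fun hφ hψ j x hx => (FN _).add_mem (hφ j x hx) (hψ j x hx)
  neg_mem' := fun hφ j x hx => (FN _).neg_mem (hφ j x hx)

/-- For a filt free filtered `(D, Dᵢ)`-module `L = ⊕ₖ D(n k)` of finite type, the canonical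
morphism `gr^F Hom_D(L, N) → Hom_{gr D}(gr L, gr N)` is an isomorphism of abelian groups:
in each degree `i` it is the isomorphism `grᵢ^F Hom_D(L, N) ≃ ∏ₖ gr_{i - n k} N` given by
evaluation at the standard basis vectors. -/
theorem stmt_11 {D N : Type*} [Ring D] [AddCommGroup N] [Module D N]
    (FD : ℤ → AddSubgroup D) (hFDmono : Monotone FD)
    (hFDone : (1 : D) ∈ FD 0)
    (hFDmul : ∀ i j : ℤ, ∀ a ∈ FD i, ∀ b ∈ FD j, a * b ∈ FD (i + j))
    (hFDexh : ∀ a : D, ∃ i, a ∈ FD i)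
    (FN : ℤ → AddSubgroup N) (hFNmono : Monotone FN)
    (hFNsmul : ∀ i j : ℤ, ∀ a ∈ FD i, ∀ y ∈ FN j, a • y ∈ FN (i + j))
    (s : ℕ) (n : Fin s → ℤ) :
    ∀ i : ℤ,
      ∃ e : (↥(homFilt (D := D) (freeFilt FD n) FN i) ⧸
          (homFilt (D := D) (freeFilt FD n) FN (i - 1)).addSubgroupOf
            (homFilt (D := D) (freeFilt FD n) FN i)) ≃+
        (∀ k : Fin s, ↥(FN (i - n k)) ⧸ (FN (i - n k - 1)).addSubgroupOf (FN (i - n k))),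
      ∀ φ : homFilt (D := D) (freeFilt FD n) FN i,
        e (QuotientAddGroup.mk φ) = fun k =>
          QuotientAddGroup.mk
            ⟨(φ : (Fin s → D) →ₗ[D] N) (Pi.single k 1), by
              have hsingle : (Pi.single k 1 : Fin s → D) ∈ freeFilt FD n (-(n k)) := by
                intro k'
                rcases eq_or_ne k' k with h | h
                · subst h
                  simpa [Pi.single_eq_same] using hFDone
                · simpa [Pi.single_eq_of_ne h] using (FD _).zero_mem
              simpa [sub_eq_add_neg] using φ.2 (-(n k)) _ hsingle⟩ := by
  intro i
  classical
  have hsingle : ∀ k : Fin s, (Pi.single k 1 : Fin s → D) ∈ freeFilt FD n (-(n k)) := by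
    intro k k'
    rcases eq_or_ne k' k with h | h
    · subst h; simpa [Pi.single_eq_same] using hFDone
    · simpa [Pi.single_eq_of_ne h] using (FD _).zero_mem
  have hval : ∀ φ : homFilt (D := D) (freeFilt FD n) FN i, ∀ k,
      (φ : (Fin s → D) →ₗ[D] N) (Pi.single k 1) ∈ FN (i - n k) := fun φ k => by
    simpa [sub_eq_add_neg] using φ.2 (-(n k)) _ (hsingle k)
  have hdecomp : ∀ (φ : (Fin s → D) →ₗ[D] N) (x : Fin s → D),
      φ x = ∑ k, x k • φ (Pi.single k 1) := by
    intro φ x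
    have hx : x = ∑ k, x k • (Pi.single k 1 : Fin s → D) := by
      have h1 : ∀ k, x k • (Pi.single k 1 : Fin s → D) = Pi.single k (x k) := by
        intro k; funext j
        rcases eq_or_ne j k with h | h
        · subst h; simp
        · simp [Pi.single_eq_of_ne h]
      simp_rw [h1]
      exact (Finset.univ_sum_single x).symm
    conv_lhs => rw [hx]
    rw [map_sum]
    simp_rw [map_smul]
  let F : homFilt (D := D) (freeFilt FD n) FN i →+
      (∀ k : Fin s, ↥(FN (i - n k)) ⧸ (FN (i - n k - 1)).addSubgroupOf (FN (i - n k))) :=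
  { toFun := fun φ k =>
      QuotientAddGroup.mk ⟨(φ : (Fin s → D) →ₗ[D] N) (Pi.single k 1), hval φ k⟩
    map_zero' := rfl
    map_add' := fun φ ψ => rfl }
  have hker : ∀ φ ∈ (homFilt (D := D) (freeFilt FD n) FN (i - 1)).addSubgroupOf
      (homFilt (D := D) (freeFilt FD n) FN i), F φ = 0 := by
    intro φ hφ
    rw [AddSubgroup.mem_addSubgroupOf] at hφ
    funext k
    have h1 : (φ : (Fin s → D) →ₗ[D] N) (Pi.single k 1) ∈ FN (i - n k - 1) := by
      have h2 := hφ (-(n k)) _ (hsingle k)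
      have hidx : i - 1 + -(n k) = i - n k - 1 := by ring
      rwa [hidx] at h2
    refine (QuotientAddGroup.eq_zero_iff _).2 ?_
    rw [AddSubgroup.mem_addSubgroupOf]
    exact h1
  let G := QuotientAddGroup.lift _ F hker
  have hinj : Function.Injective G := by
    rw [injective_iff_map_eq_zero]
    intro q hq
    obtain ⟨φ, rfl⟩ := QuotientAddGroup.mk_surjective q
    have hF : F φ = 0 := hq
    have hmem : ∀ k, (φ : (Fin s → D) →ₗ[D] N) (Pi.single k 1) ∈ FN (i - n k - 1) := by
      intro k
      have h5 : (QuotientAddGroup.mk ⟨(φ : (Fin s → D) →ₗ[D] N) (Pi.single k 1), hval φ k⟩ :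
          ↥(FN (i - n k)) ⧸ (FN (i - n k - 1)).addSubgroupOf (FN (i - n k))) = 0 := congrFun hF k
      rw [QuotientAddGroup.eq_zero_iff, AddSubgroup.mem_addSubgroupOf] at h5
      exact h5
    refine (QuotientAddGroup.eq_zero_iff _).2 ?_
    rw [AddSubgroup.mem_addSubgroupOf]
    intro j x hx
    rw [hdecomp]
    refine AddSubgroup.sum_mem _ fun k _ => ?_
    have h3 := hFNsmul (j + n k) (i - n k - 1) (x k) (hx k) _ (hmem k)
    have hidx : (j + n k) + (i - n k - 1) = i - 1 + j := by ring
    rwa [hidx] at h3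
  have hsurj : Function.Surjective G := by
    intro y
    choose rep hrep using fun k => QuotientAddGroup.mk_surjective (y k)
    let ψ : (Fin s → D) →ₗ[D] N :=
    { toFun := fun x => ∑ k, x k • (rep k : N)
      map_add' := fun x z => by
        simp [add_smul, Finset.sum_add_distrib]
      map_smul' := fun a x => by
        simp [mul_smul, Finset.smul_sum] }
    have hψ : ψ ∈ homFilt (D := D) (freeFilt FD n) FN i := by
      intro j x hx
      show (∑ k, x k • (rep k : N)) ∈ FN (i + j)
      refine AddSubgroup.sum_mem _ fun k _ => ?_
      have h4 := hFNsmul (j + n k) (i - n k) (x k) (hx k) _ (rep k).2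
      have hidx : (j + n k) + (i - n k) = i + j := by ring
      rwa [hidx] at h4
    refine ⟨QuotientAddGroup.mk ⟨ψ, hψ⟩, ?_⟩
    funext k
    have hval' : ψ (Pi.single k 1) = (rep k : N) := by
      show (∑ k', (Pi.single k 1 : Fin s → D) k' • (rep k' : N)) = _
      rw [Finset.sum_eq_single k]
      · simp
      · intro k' _ hk'; simp [Pi.single_eq_of_ne hk']
      · simp
    have hsub : (⟨ψ (Pi.single k 1), hval ⟨ψ, hψ⟩ k⟩ : ↥(FN (i - n k))) = rep k :=
      Subtype.ext hval'
    calc G (QuotientAddGroup.mk ⟨ψ, hψ⟩) k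
        = QuotientAddGroup.mk ⟨ψ (Pi.single k 1), hval ⟨ψ, hψ⟩ k⟩ := rfl
      _ = QuotientAddGroup.mk (rep k) := by rw [hsub]
      _ = y k := hrep k
  exact ⟨AddEquiv.ofBijective G ⟨hinj, hsurj⟩, fun φ => rfl⟩
end

section
/- Let u : (M, M_i) → (N, N_i) be a morphism of filtered modules. Then u is strict (u(M_i) = u(M) ∩ N_i for all i) if and only if ker(gr u) = gr(ker u) and coker(gr u) = gr(coker u), where ker u carries the filtration ker u ∩ M_i, and coker u carries the filtration image of N_i. -/
/-- In Laumon's setting (complete filtered ring, good filtered modules: filtrations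
exhaustive with each step complete and separated), a filtered morphism `u` is strict iff
`ker(gr u) = gr(ker u)` and `coker(gr u) = gr(coker u)`. -/
theorem stmt_15 {D M N : Type*} [Ring D] [AddCommGroup M] [AddCommGroup N]
    [Module D M] [Module D N]
    (FD : ℤ → AddSubgroup D) (hFDmono : Monotone FD)
    (hFDone : (1 : D) ∈ FD 0)
    (hFDmul : ∀ i j : ℤ, ∀ a ∈ FD i, ∀ b ∈ FD j, a * b ∈ FD (i + j))
    (hFDexh : ∀ a : D, ∃ i, a ∈ FD i)
    (hFDcomp : ∀ i : ℤ, ∀ y : ℕ → D, (∀ n, y n ∈ FD i) →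
      (∀ n : ℕ, y (n + 1) - y n ∈ FD (i - (n : ℤ))) →
      ∃ z ∈ FD i, ∀ n : ℕ, z - y n ∈ FD (i - (n : ℤ)))
    (hFDsep : ∀ i : ℤ, ∀ a ∈ FD i, (∀ n : ℕ, a ∈ FD (i - (n : ℤ))) → a = 0)
    (FM : ℤ → AddSubgroup M) (hFMmono : Monotone FM)
    (hFMsmul : ∀ i j : ℤ, ∀ a ∈ FD i, ∀ x ∈ FM j, a • x ∈ FM (i + j))
    (FN : ℤ → AddSubgroup N) (hFNmono : Monotone FN)
    (hFNsmul : ∀ i j : ℤ, ∀ a ∈ FD i, ∀ y ∈ FN j, a • y ∈ FN (i + j))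
    -- exhaustiveness
    (hMexh : ∀ x : M, ∃ i, x ∈ FM i) (hNexh : ∀ y : N, ∃ i, y ∈ FN i)
    -- completeness and separatedness of each filtration step
    (hMcomp : ∀ i : ℤ, ∀ y : ℕ → M, (∀ n, y n ∈ FM i) →
      (∀ n : ℕ, y (n + 1) - y n ∈ FM (i - (n : ℤ))) →
      ∃ z ∈ FM i, ∀ n : ℕ, z - y n ∈ FM (i - (n : ℤ)))
    (hMsep : ∀ i : ℤ, ∀ x ∈ FM i, (∀ n : ℕ, x ∈ FM (i - (n : ℤ))) → x = 0)
    (hNcomp : ∀ i : ℤ, ∀ y : ℕ → N, (∀ n, y n ∈ FN i) →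
      (∀ n : ℕ, y (n + 1) - y n ∈ FN (i - (n : ℤ))) →
      ∃ z ∈ FN i, ∀ n : ℕ, z - y n ∈ FN (i - (n : ℤ)))
    (hNsep : ∀ i : ℤ, ∀ y ∈ FN i, (∀ n : ℕ, y ∈ FN (i - (n : ℤ))) → y = 0)
    -- `u` is a filtered morphism
    (u : M →ₗ[D] N) (hu : ∀ i : ℤ, ∀ x ∈ FM i, u x ∈ FN i) :
    -- `u` is strict
    ((∀ (i : ℤ) (x : M), u x ∈ FN i → ∃ x' ∈ FM i, u x' = u x) ↔
      -- `ker(gr u) = gr(ker u)` …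
      ((∀ i : ℤ, ∀ x ∈ FM i, u x ∈ FN (i - 1) →
          ∃ x' : M, x' ∈ FM i ∧ u x' = 0 ∧ x - x' ∈ FM (i - 1)) ∧
        -- … and `coker(gr u) = gr(coker u)`
        (∀ i : ℤ, ∀ y ∈ FN i, (∃ m : M, y - u m ∈ FN (i - 1)) →
          ∃ x ∈ FM i, y - u x ∈ FN (i - 1)))) := by

  constructor
  · intro hs
    constructor
    · intro i x hx hux
      obtain ⟨x'', hx''1, hx''2⟩ := hs (i - 1) x hux
      refine ⟨x - x'', AddSubgroup.sub_mem _ hx (hFMmono (by omega : i - 1 ≤ i) hx''1), ?_, ?_⟩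
      · rw [map_sub, hx''2, sub_self]
      · simpa using hx''1
    · rintro i y hy ⟨m, hm⟩
      have hum : u m ∈ FN i := by
        have : u m = y - (y - u m) := (sub_sub_cancel y (u m)).symm
        rw [this]
        exact AddSubgroup.sub_mem _ hy (hFNmono (by omega : i - 1 ≤ i) hm)
      obtain ⟨x, hx1, hx2⟩ := hs i m hum
      exact ⟨x, hx1, by rw [hx2]; exact hm⟩
  · rintro ⟨h1, _⟩ i x hux
    have key : ∀ n : ℕ, ∀ x : M, x ∈ FM (i + n) → u x ∈ FN i → ∃ x' ∈ FM i, u x' = u x := by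
      intro n
      induction n with
      | zero => intro x hx hux; exact ⟨x, by simpa using hx, rfl⟩
      | succ n ih =>
        intro x hx hux
        obtain ⟨x', hx'1, hx'2, hx'3⟩ := h1 (i + ((n : ℤ) + 1)) x (by push_cast at hx; exact hx)
          (hFNmono (by omega : i ≤ i + ((n : ℤ) + 1) - 1) hux)
        have hmem : x - x' ∈ FM (i + (n : ℤ)) := by
          have : i + ((n : ℤ) + 1) - 1 = i + (n : ℤ) := by ring
          rwa [this] at hx'3
        have himg : u (x - x') ∈ FN i := by rw [map_sub, hx'2, sub_zero]; exact hux
        obtain ⟨x'', h1', h2'⟩ := ih (x - x') hmem himg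
        exact ⟨x'', h1', by rw [h2', map_sub, hx'2, sub_zero]⟩
    obtain ⟨j, hj⟩ := hMexh x
    rcases le_or_gt j i with h | h
    · exact ⟨x, hFMmono h hj, rfl⟩
    · exact key (j - i).toNat x (hFMmono (by omega) hj) hux
end
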